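/- Let P be an m×n pattern with m ≤ n. There exists a matrix with pattern P all of whose singular values are equal and nonzero if and only if there exists a row-orthonormal matrix (i.e., Q Qᵀ = I) with pattern P. Moreover, in that case, every list of m positive reals is the list of singular values of some matrix with pattern P. -/

import Mathlib

open Matrix

/-- The singular values of a real m×n matrix: nonnegative square roots of
the eigenvalues of A * Aᵀ (= A * Aᴴ over ℝ). -/
noncomputable def sv {m n : ℕ} (A : Matrix (Fin m) (Fin n) ℝ) : Fin m → ℝ :=
  fun i => Real.sqrt ((Matrix.isHermitian_mul_conjTranspose_self A).eigenvalues i)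

/-- A real matrix `A` has 0-1 pattern `P` if `A i j ≠ 0` exactly when `P i j = true`. -/
def HasPattern {m n : ℕ} (A : Matrix (Fin m) (Fin n) ℝ) (P : Matrix (Fin m) (Fin n) Bool) : Prop :=
  ∀ i j, A i j ≠ 0 ↔ P i j = true

/-- Two tuples with the same multiset of values differ by a permutation. -/
lemma exists_perm_of_multiset_map_eq {k : ℕ} {f g : Fin k → ℝ}
    (h : Multiset.map f Finset.univ.val = Multiset.map g Finset.univ.val) :
    ∃ e : Equiv.Perm (Fin k), ∀ i, f i = g (e i) := by
  have hperm : List.Perm (List.ofFn f) (List.ofFn g) := by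
    rw [Fin.univ_val_map, Fin.univ_val_map] at h
    exact Multiset.coe_eq_coe.mp h
  have hsf : List.Perm (List.ofFn (f ∘ Tuple.sort f)) (List.ofFn (g ∘ Tuple.sort g)) :=
    ((Equiv.Perm.ofFn_comp_perm _ f).trans hperm).trans
      (Equiv.Perm.ofFn_comp_perm _ g).symm
  have hsorted : List.ofFn (f ∘ Tuple.sort f) = List.ofFn (g ∘ Tuple.sort g) :=
    List.Perm.eq_of_sortedLE
      ((List.sortedLE_ofFn_iff).mpr (Tuple.monotone_sort f))
      ((List.sortedLE_ofFn_iff).mpr (Tuple.monotone_sort g)) hsf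
  have hfun : f ∘ Tuple.sort f = g ∘ Tuple.sort g := by
    have := List.ofFn_injective hsorted
    exact this
  refine ⟨(Tuple.sort f).symm.trans (Tuple.sort g), fun i => ?_⟩
  have := congrFun hfun ((Tuple.sort f).symm i)
  simpa using this

lemma smul_one_diag {k : ℕ} (x : ℝ) :
    x • (1 : Matrix (Fin k) (Fin k) ℝ) = Matrix.diagonal (fun _ => x) := by
  ext i j
  rcases eq_or_ne i j with h | h
  · subst h; simp
  · simp [Matrix.one_apply_ne h, Matrix.diagonal_apply_ne _ h]

/-- The multiset of Hermitian eigenvalues of a real diagonal matrix is the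
multiset of diagonal entries. -/
lemma eig_multiset_diag {k : ℕ} (d : Fin k → ℝ)
    (hB : (Matrix.diagonal d).IsHermitian) :
    Multiset.map hB.eigenvalues Finset.univ.val = Multiset.map d Finset.univ.val := by
  set ev := hB.eigenvalues with hev
  clear_value ev
  -- identity: x • 1 = diagonal (const x)
  have hsmul : ∀ (x : ℝ) (f : Fin k → ℝ),
      x • (1 : Matrix (Fin k) (Fin k) ℝ) - Matrix.diagonal f
        = Matrix.diagonal (fun i => x - f i) := by
    intro x f
    rw [smul_one_diag, ← Matrix.diagonal_sub]
  -- polynomial identity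
  have hpq : (∏ i, (Polynomial.X - Polynomial.C (d i)))
      = ∏ i, (Polynomial.X - Polynomial.C (ev i)) := by
    apply Polynomial.funext
    intro x
    have heval : ∀ (f : Fin k → ℝ),
        Polynomial.eval x (∏ i, (Polynomial.X - Polynomial.C (f i))) = ∏ i, (x - f i) := by
      intro f; simp [Polynomial.eval_prod]
    rw [heval, heval]
    have hdet : ∀ (f : Fin k → ℝ),
        (x • (1 : Matrix (Fin k) (Fin k) ℝ) - Matrix.diagonal f).det = ∏ i, (x - f i) := by
      intro f; rw [hsmul, Matrix.det_diagonal]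
    set U : Matrix (Fin k) (Fin k) ℝ := (hB.eigenvectorUnitary : Matrix (Fin k) (Fin k) ℝ)
      with hU
    have hUU : U * star U = 1 := (Matrix.mem_unitaryGroup_iff).mp hB.eigenvectorUnitary.2
    have hofReal : (RCLike.ofReal ∘ ev : Fin k → ℝ) = ev := by
      funext i; simp
    have hspec : Matrix.diagonal d = U * Matrix.diagonal ev * star U := by
      have h0 := hB.spectral_theorem
      rw [← hev, hofReal] at h0
      exact h0
    have hsim : x • (1 : Matrix (Fin k) (Fin k) ℝ) - Matrix.diagonal d
        = U * (x • (1 : Matrix (Fin k) (Fin k) ℝ) - Matrix.diagonal ev) * star U := by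
      rw [Matrix.mul_sub, Matrix.sub_mul, Matrix.mul_smul, Matrix.smul_mul, Matrix.mul_one,
        hUU, ← hspec]
    have hdetsim : (x • (1 : Matrix (Fin k) (Fin k) ℝ) - Matrix.diagonal d).det
        = (x • (1 : Matrix (Fin k) (Fin k) ℝ) - Matrix.diagonal ev).det := by
      rw [hsim, Matrix.det_mul, Matrix.det_mul]
      have : U.det * (star U).det = 1 := by
        rw [← Matrix.det_mul, hUU, Matrix.det_one]
      calc U.det * (x • (1 : Matrix (Fin k) (Fin k) ℝ) - Matrix.diagonal ev).det * (star U).det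
          = (x • (1 : Matrix (Fin k) (Fin k) ℝ) - Matrix.diagonal ev).det * (U.det * (star U).det) := by ring
        _ = _ := by rw [this, mul_one]
    rw [← hdet d, ← hdet ev, hdetsim]
  -- pass to roots
  have hroots : ∀ (f : Fin k → ℝ),
      (∏ i, (Polynomial.X - Polynomial.C (f i))).roots = Multiset.map f Finset.univ.val := by
    intro f
    have : (∏ i, (Polynomial.X - Polynomial.C (f i)))
        = ((Multiset.map f Finset.univ.val).map (fun a => Polynomial.X - Polynomial.C a)).prod := by
      rw [Multiset.map_map]
      rfl
    rw [this, Polynomial.roots_multiset_prod_X_sub_C]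
  have := congrArg Polynomial.roots hpq
  rw [hroots, hroots] at this
  rw [← this]

lemma eig_multiset_eq {k : ℕ} {B : Matrix (Fin k) (Fin k) ℝ} (hB : B.IsHermitian)
    (d : Fin k → ℝ) (h : B = Matrix.diagonal d) :
    Multiset.map hB.eigenvalues Finset.univ.val = Multiset.map d Finset.univ.val := by
  subst h; exact eig_multiset_diag d hB

lemma conjT_eq_transpose {m n : ℕ} (A : Matrix (Fin m) (Fin n) ℝ) : Aᴴ = Aᵀ :=
  Matrix.conjTranspose_eq_transpose_of_trivial A

theorem stmt_1 (m n : ℕ) (hmn : m ≤ n) (P : Matrix (Fin m) (Fin n) Bool) :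
    ((∃ A : Matrix (Fin m) (Fin n) ℝ,
        HasPattern A P ∧ ∃ c : ℝ, c ≠ 0 ∧ ∀ i, sv A i = c) ↔
      (∃ Q : Matrix (Fin m) (Fin n) ℝ, HasPattern Q P ∧ Q * Qᵀ = 1)) ∧
    ((∃ Q : Matrix (Fin m) (Fin n) ℝ, HasPattern Q P ∧ Q * Qᵀ = 1) →
      ∀ σ : Fin m → ℝ, (∀ i, 0 < σ i) →
        ∃ A : Matrix (Fin m) (Fin n) ℝ, HasPattern A P ∧
          ∃ e : Equiv.Perm (Fin m), ∀ i, sv A i = σ (e i)) := by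
  -- general fact: if B := A * Aᵀ = diagonal d, then the singular values of A
  -- are (up to a permutation) the square roots of d
  have key : ∀ (A : Matrix (Fin m) (Fin n) ℝ) (d : Fin m → ℝ),
      A * Aᵀ = Matrix.diagonal d →
      ∃ e : Equiv.Perm (Fin m), ∀ i, sv A i = Real.sqrt (d (e i)) := by
    intro A d hAA
    have hAH : A * Aᴴ = Matrix.diagonal d := by rw [conjT_eq_transpose]; exact hAA
    have hHerm := Matrix.isHermitian_mul_conjTranspose_self A
    have hmul : Multiset.map hHerm.eigenvalues Finset.univ.val
        = Multiset.map d Finset.univ.val := eig_multiset_eq hHerm d hAH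
    obtain ⟨e, he⟩ := exists_perm_of_multiset_map_eq hmul
    exact ⟨e, fun i => by rw [sv, he i]⟩
  constructor
  · constructor
    · -- all singular values equal c ≠ 0 → row-orthonormal with same pattern
      rintro ⟨A, hpat, c, hc, hsv⟩
      rcases m.eq_zero_or_pos with hm | hm
      · subst hm
        exact ⟨A, hpat, Subsingleton.elim _ _⟩
      have hHerm := Matrix.isHermitian_mul_conjTranspose_self A
      have hcpos : 0 < c := by
        have := hsv ⟨0, hm⟩
        have hnn : 0 ≤ sv A ⟨0, hm⟩ := Real.sqrt_nonneg _
        rw [this] at hnn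
        exact lt_of_le_of_ne hnn (Ne.symm hc)
      -- eigenvalues are all c ^ 2
      have heig : ∀ i, hHerm.eigenvalues i = c ^ 2 := by
        intro i
        have h1 : Real.sqrt (hHerm.eigenvalues i) = c := hsv i
        have hpos : 0 < hHerm.eigenvalues i := by
          rw [← Real.sqrt_pos, h1]; exact hcpos
        have := Real.sq_sqrt hpos.le
        rw [h1] at this
        rw [← this]
      -- A * Aᴴ = c^2 • 1
      have hAA : A * Aᴴ = (c ^ 2) • (1 : Matrix (Fin m) (Fin m) ℝ) := by
        have hspec := hHerm.spectral_theorem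
        have hofReal : (RCLike.ofReal ∘ hHerm.eigenvalues : Fin m → ℝ)
            = fun _ => c ^ 2 := by funext i; simp; exact heig i
        set U : Matrix (Fin m) (Fin m) ℝ := (hHerm.eigenvectorUnitary : Matrix (Fin m) (Fin m) ℝ)
        have hUU : U * star U = 1 := (Matrix.mem_unitaryGroup_iff).mp hHerm.eigenvectorUnitary.2
        have hdiag : Matrix.diagonal (fun _ : Fin m => c ^ 2)
            = (c ^ 2) • (1 : Matrix (Fin m) (Fin m) ℝ) := (smul_one_diag _).symm
        rw [hspec, Unitary.conjStarAlgAut_apply, hofReal, hdiag, Matrix.mul_smul, Matrix.smul_mul, Matrix.mul_one]; exact congrArg (c ^ 2 • ·) hUU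
      refine ⟨c⁻¹ • A, fun i j => ?_, ?_⟩
      · rw [← hpat i j]
        simp [Matrix.smul_apply, smul_eq_mul, mul_ne_zero_iff, inv_ne_zero hc, hc]
      · rw [Matrix.transpose_smul, Matrix.smul_mul, Matrix.mul_smul, smul_smul,
          ← conjT_eq_transpose, hAA, smul_smul]
        rw [show c⁻¹ * c⁻¹ * c ^ 2 = 1 by field_simp, one_smul]
    · -- row-orthonormal → all singular values 1
      rintro ⟨Q, hpat, hQQ⟩
      refine ⟨Q, hpat, 1, one_ne_zero, fun i => ?_⟩
      obtain ⟨e, he⟩ := key Q (fun _ => 1) (by rw [hQQ, Matrix.diagonal_one])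
      rw [he i, Real.sqrt_one]
  · rintro ⟨Q, hpat, hQQ⟩ σ hσ
    refine ⟨Matrix.diagonal σ * Q, fun i j => ?_, ?_⟩
    · rw [← hpat i j, Matrix.diagonal_mul]
      simp [mul_ne_zero_iff, (hσ i).ne']
    · have hAA : (Matrix.diagonal σ * Q) * (Matrix.diagonal σ * Q)ᵀ
          = Matrix.diagonal (fun i => σ i ^ 2) := by
        rw [Matrix.transpose_mul, Matrix.diagonal_transpose, ← Matrix.mul_assoc,
          Matrix.mul_assoc (Matrix.diagonal σ), hQQ, Matrix.mul_one,
          Matrix.diagonal_mul_diagonal]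
        simp [sq]
      obtain ⟨e, he⟩ := key _ _ hAA
      refine ⟨e, fun i => ?_⟩
      rw [he i, Real.sqrt_sq (hσ (e i)).le]
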